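/- Let X₁ and X₀ be groups, d : X₁ → X₀ and e : X₀ → X₁ group homomorphisms with d ∘ e = id, and P₁ ⊆ X₁, P₀ ⊆ X₀ submonoids with e(P₀) ⊆ P₁. Suppose the Schreier condition holds: for every a ∈ P₁, a · e(d(a))⁻¹ ∈ P₁. Then for every x ∈ P₀ and every a ∈ (ker d) ∩ P₁, the conjugate e(x) · a · e(x)⁻¹ belongs to (ker d) ∩ P₁; that is, the conjugation action of P₀ through e preserves the positive cone of the kernel. -/
import Mathlib

/-- for a Schreier point of right-preordered groups, conjugation by
`e x` (`x` positive) preserves the positive cone of the kernel. -/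
theorem schreier_action_preserves_kernel_cone {X₁ X₀ : Type*} [Group X₁] [Group X₀]
    (d : X₁ →* X₀) (e : X₀ →* X₁) (hde : ∀ x, d (e x) = x)
    (P₁ : Submonoid X₁) (P₀ : Submonoid X₀) (he : ∀ x ∈ P₀, e x ∈ P₁)
    (schreier : ∀ a ∈ P₁, a * (e (d a))⁻¹ ∈ P₁) :
    ∀ x ∈ P₀, ∀ a : X₁, a ∈ d.ker → a ∈ P₁ →
      e x * a * (e x)⁻¹ ∈ d.ker ∧ e x * a * (e x)⁻¹ ∈ P₁ := by
  intro x hx a hker hP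
  have hda : d a = 1 := hker
  constructor
  · show d _ = 1
    simp [hde, hda]
  · have h1 : e x * a ∈ P₁ := P₁.mul_mem (he x hx) hP
    have h2 := schreier _ h1
    have : d (e x * a) = x := by simp [hde, hda]
    rwa [this] at h2
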